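/- arXiv:2310.15351 — 4 statements merged into one kernel-verified Lean document; each statement's English description precedes it below -/
import Mathlib

section
/- Let H be a Hilbert space and let Ẑ, Z be bounded, self-adjoint, positive definite operators on H with bounded inverses. If the operator norm of M := Ẑ^{-1/2}(Z - Ẑ)Z^{-1/2} satisfies ‖M‖ ≤ c for some c ∈ (0,1), then for every ψ ∈ H, ⟨ψ, Ẑ^{-1}ψ⟩ ≤ (1-c)^{-1} ⟨ψ, Z^{-1}ψ⟩. -/
open scoped RealInnerProductSpace

/-- If `M = Ẑ^{-1/2} (Z - Ẑ) Z^{-1/2}` has operator norm at most `c ∈ (0,1)`,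
then `⟨ψ, Ẑ⁻¹ ψ⟩ ≤ (1 - c)⁻¹ ⟨ψ, Z⁻¹ ψ⟩` for every `ψ`. -/
theorem stmt_0 {H : Type*} [NormedAddCommGroup H] [InnerProductSpace ℝ H] [CompleteSpace H]
    (Zh Z Zhinv Zinv Zhsqrtinv Zsqrtinv : H →L[ℝ] H)
    (hZh_sa : IsSelfAdjoint Zh) (hZ_sa : IsSelfAdjoint Z)
    (hZh_pos : ∀ ψ : H, ψ ≠ 0 → 0 < ⟪ψ, Zh ψ⟫)
    (hZ_pos : ∀ ψ : H, ψ ≠ 0 → 0 < ⟪ψ, Z ψ⟫)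
    (hZhinv₁ : Zh ∘L Zhinv = 1) (hZhinv₂ : Zhinv ∘L Zh = 1)
    (hZinv₁ : Z ∘L Zinv = 1) (hZinv₂ : Zinv ∘L Z = 1)
    -- `Zhsqrtinv` is the (self-adjoint, positive) inverse square root of `Ẑ`
    (hZhs_sa : IsSelfAdjoint Zhsqrtinv)
    (hZhs : Zhsqrtinv ∘L Zhsqrtinv = Zhinv)
    -- `Zsqrtinv` is the (self-adjoint, positive) inverse square root of `Z`
    (hZs_sa : IsSelfAdjoint Zsqrtinv)
    (hZs : Zsqrtinv ∘L Zsqrtinv = Zinv)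
    (c : ℝ) (hc : c ∈ Set.Ioo (0 : ℝ) 1)
    (hM : ‖Zhsqrtinv ∘L (Z - Zh) ∘L Zsqrtinv‖ ≤ c) :
    ∀ ψ : H, ⟪ψ, Zhinv ψ⟫ ≤ (1 - c)⁻¹ * ⟪ψ, Zinv ψ⟫ := by
  obtain ⟨hc0, hc1⟩ := hc
  intro ψ
  set M : H →L[ℝ] H := Zhsqrtinv ∘L (Z - Zh) ∘L Zsqrtinv with hMdef
  set u := Zhsqrtinv ψ with hu
  set v := Zsqrtinv ψ with hv
  -- a = ‖u‖², b = ‖v‖²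
  have hsa_h : ∀ x y : H, ⟪x, Zhsqrtinv y⟫ = ⟪Zhsqrtinv x, y⟫ := by
    intro x y
    rw [← ContinuousLinearMap.adjoint_inner_left, hZhs_sa.adjoint_eq]
  have hsa_s : ∀ x y : H, ⟪x, Zsqrtinv y⟫ = ⟪Zsqrtinv x, y⟫ := by
    intro x y
    rw [← ContinuousLinearMap.adjoint_inner_left, hZs_sa.adjoint_eq]
  have ha : ⟪ψ, Zhinv ψ⟫ = ‖u‖ ^ 2 := by
    have : Zhinv ψ = Zhsqrtinv (Zhsqrtinv ψ) := by
      rw [← hZhs]; rfl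
    rw [this, hsa_h, ← hu, real_inner_self_eq_norm_sq]
  have hb : ⟪ψ, Zinv ψ⟫ = ‖v‖ ^ 2 := by
    have : Zinv ψ = Zsqrtinv (Zsqrtinv ψ) := by
      rw [← hZs]; rfl
    rw [this, hsa_s, ← hv, real_inner_self_eq_norm_sq]
  -- key identity: Zhinv - Zinv = Zhinv ∘ (Z - Zh) ∘ Zinv, applied to ψ
  have hkey : ⟪ψ, Zhinv ψ⟫ - ⟪ψ, Zinv ψ⟫ = ⟪u, M v⟫ := by
    have hop : Zhinv - Zinv = Zhsqrtinv ∘L M ∘L Zsqrtinv := by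
      rw [hMdef]
      have : Zhsqrtinv ∘L ((Zhsqrtinv ∘L (Z - Zh) ∘L Zsqrtinv) ∘L Zsqrtinv)
          = Zhinv ∘L (Z - Zh) ∘L Zinv := by
        rw [← hZhs, ← hZs]
        ext x; simp [ContinuousLinearMap.comp_apply]
      rw [this]
      have h2 : Zhinv ∘L (Z - Zh) ∘L Zinv
          = Zhinv ∘L (Z ∘L Zinv) - (Zhinv ∘L Zh) ∘L Zinv := by
        ext x
        simp [ContinuousLinearMap.comp_apply, map_sub]
      rw [h2, hZinv₁, hZhinv₂]
      ext x; simp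
    have := congrArg (fun T : H →L[ℝ] H => ⟪ψ, T ψ⟫) hop
    simp only [ContinuousLinearMap.sub_apply, inner_sub_right,
      ContinuousLinearMap.comp_apply] at this
    rw [this, hsa_h]
  have hbound : ⟪u, M v⟫ ≤ c * (‖u‖ * ‖v‖) := by
    calc ⟪u, M v⟫ ≤ ‖u‖ * ‖M v‖ := real_inner_le_norm u (M v)
      _ ≤ ‖u‖ * (‖M‖ * ‖v‖) := by
          exact mul_le_mul_of_nonneg_left (M.le_opNorm v) (norm_nonneg u)
      _ ≤ c * (‖u‖ * ‖v‖) := by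
          have h2 : ‖M‖ * ‖v‖ ≤ c * ‖v‖ :=
            mul_le_mul_of_nonneg_right hM (norm_nonneg v)
          nlinarith [norm_nonneg u, norm_nonneg v]
  rw [ha, hb]
  rw [ha, hb] at hkey
  have h1 : ‖u‖ ^ 2 - ‖v‖ ^ 2 ≤ c * (‖u‖ * ‖v‖) := hkey ▸ hbound
  have hpos : (0:ℝ) < 1 - c := by linarith
  rw [inv_mul_eq_div, le_div_iff₀ hpos]
  nlinarith [norm_nonneg u, norm_nonneg v, sq_nonneg (‖u‖ - ‖v‖), h1,
    mul_nonneg (mul_nonneg hc0.le (norm_nonneg u)) (norm_nonneg v)]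
end

section
/- Let H be a Hilbert space and Ẑ, Z bounded positive self-adjoint invertible operators on H. Define C := Z^{-1/2} Ẑ^{1/2} and M := Ẑ^{-1/2}(Z - Ẑ)Z^{-1/2}. Then ‖M‖² ≤ ‖(C C*)^{-1} - Id‖ + ‖C C* - Id‖, where ‖·‖ denotes operator norm. -/
open scoped RealInnerProductSpace

/-- With `C = Z^{-1/2} Ẑ^{1/2}` and `M = Ẑ^{-1/2}(Z - Ẑ)Z^{-1/2}`,
we have `‖M‖² ≤ ‖(C C*)⁻¹ - Id‖ + ‖C C* - Id‖`. -/
theorem stmt_1 {H : Type*} [NormedAddCommGroup H] [InnerProductSpace ℝ H] [CompleteSpace H]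
    (Zh Z Zhinv Zinv Zhsqrt Zsqrt Zhsqrtinv Zsqrtinv CCtinv : H →L[ℝ] H)
    (hZh_sa : IsSelfAdjoint Zh) (hZ_sa : IsSelfAdjoint Z)
    (hZh_pos : ∀ ψ : H, ψ ≠ 0 → 0 < ⟪ψ, Zh ψ⟫)
    (hZ_pos : ∀ ψ : H, ψ ≠ 0 → 0 < ⟪ψ, Z ψ⟫)
    (hZhinv₁ : Zh ∘L Zhinv = 1) (hZhinv₂ : Zhinv ∘L Zh = 1)
    (hZinv₁ : Z ∘L Zinv = 1) (hZinv₂ : Zinv ∘L Z = 1)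
    -- square roots and their inverses
    (hZhsqrt_sa : IsSelfAdjoint Zhsqrt) (hZhsqrt : Zhsqrt ∘L Zhsqrt = Zh)
    (hZsqrt_sa : IsSelfAdjoint Zsqrt) (hZsqrt : Zsqrt ∘L Zsqrt = Z)
    (hZhs_sa : IsSelfAdjoint Zhsqrtinv) (hZhs : Zhsqrtinv ∘L Zhsqrtinv = Zhinv)
    (hZs_sa : IsSelfAdjoint Zsqrtinv) (hZs : Zsqrtinv ∘L Zsqrtinv = Zinv)
    (hZhsinv₁ : Zhsqrt ∘L Zhsqrtinv = 1) (hZhsinv₂ : Zhsqrtinv ∘L Zhsqrt = 1)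
    (hZsinv₁ : Zsqrt ∘L Zsqrtinv = 1) (hZsinv₂ : Zsqrtinv ∘L Zsqrt = 1)
    -- `CCtinv` is the inverse of `C C*` where `C = Z^{-1/2} Ẑ^{1/2}`
    (hCCtinv₁ : ((Zsqrtinv ∘L Zhsqrt) ∘L
        ContinuousLinearMap.adjoint (Zsqrtinv ∘L Zhsqrt)) ∘L CCtinv = 1)
    (hCCtinv₂ : CCtinv ∘L ((Zsqrtinv ∘L Zhsqrt) ∘L
        ContinuousLinearMap.adjoint (Zsqrtinv ∘L Zhsqrt)) = 1) :
    ‖Zhsqrtinv ∘L (Z - Zh) ∘L Zsqrtinv‖ ^ 2 ≤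
      ‖CCtinv - 1‖ +
        ‖(Zsqrtinv ∘L Zhsqrt) ∘L
            ContinuousLinearMap.adjoint (Zsqrtinv ∘L Zhsqrt) - 1‖ := by
  classical
  set C : H →L[ℝ] H := Zsqrtinv ∘L Zhsqrt with hC
  set D : H →L[ℝ] H := Zhsqrtinv ∘L Zsqrt with hD
  have hCt : ContinuousLinearMap.adjoint C = Zhsqrt * Zsqrtinv := by
    rw [hC, ContinuousLinearMap.adjoint_comp, hZhsqrt_sa.adjoint_eq, hZs_sa.adjoint_eq]
    rfl
  have hDt : ContinuousLinearMap.adjoint D = Zsqrt * Zhsqrtinv := by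
    rw [hD, ContinuousLinearMap.adjoint_comp, hZsqrt_sa.adjoint_eq, hZhs_sa.adjoint_eq]
    rfl
  -- mul versions of hypotheses
  have m1 : Zhsqrt * Zhsqrtinv = (1 : H →L[ℝ] H) := hZhsinv₁
  have m2 : Zhsqrtinv * Zhsqrt = (1 : H →L[ℝ] H) := hZhsinv₂
  have m3 : Zsqrt * Zsqrtinv = (1 : H →L[ℝ] H) := hZsinv₁
  have m4 : Zsqrtinv * Zsqrt = (1 : H →L[ℝ] H) := hZsinv₂
  have hCmul : C = Zsqrtinv * Zhsqrt := rfl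
  have hDmul : D = Zhsqrtinv * Zsqrt := rfl
  have hCD : C * D = 1 := by
    rw [hCmul, hDmul, mul_assoc, ← mul_assoc Zhsqrt, m1, one_mul, m4]
  have hDC : D * C = 1 := by
    rw [hCmul, hDmul, mul_assoc, ← mul_assoc Zsqrt, m3, one_mul, m2]
  have hCtDt : ContinuousLinearMap.adjoint C * ContinuousLinearMap.adjoint D = 1 := by
    rw [hCt, hDt, mul_assoc, ← mul_assoc Zsqrtinv, m4, one_mul, m1]
  have hDtCt : ContinuousLinearMap.adjoint D * ContinuousLinearMap.adjoint C = 1 := by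
    rw [hCt, hDt, mul_assoc, ← mul_assoc Zhsqrtinv, m2, one_mul, m3]
  set A : H →L[ℝ] H := C ∘L ContinuousLinearMap.adjoint C with hA
  have hAmul : A = C * ContinuousLinearMap.adjoint C := rfl
  have hA1 : A * CCtinv = 1 := hCCtinv₁
  have hA2 : CCtinv * A = 1 := hCCtinv₂
  -- CCtinv = D† * D
  have hQ : CCtinv = ContinuousLinearMap.adjoint D * D := by
    have h3 : A * (ContinuousLinearMap.adjoint D * D) = 1 := by
      rw [hAmul, mul_assoc, ← mul_assoc (ContinuousLinearMap.adjoint C), hCtDt, one_mul, hCD]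
    calc CCtinv = CCtinv * (A * (ContinuousLinearMap.adjoint D * D)) := by rw [h3, mul_one]
      _ = (CCtinv * A) * (ContinuousLinearMap.adjoint D * D) := by rw [mul_assoc]
      _ = ContinuousLinearMap.adjoint D * D := by rw [hA2, one_mul]
  -- M = D - C†
  have hM : Zhsqrtinv ∘L (Z - Zh) ∘L Zsqrtinv = D - ContinuousLinearMap.adjoint C := by
    have : Zhsqrtinv * ((Z - Zh) * Zsqrtinv) = D - ContinuousLinearMap.adjoint C := by
      rw [sub_mul, mul_sub, hCt, hDmul, ← hZsqrt, ← hZhsqrt]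
      have e1 : Zhsqrtinv * (Zsqrt ∘L Zsqrt * Zsqrtinv) = Zhsqrtinv * Zsqrt := by
        show Zhsqrtinv * (Zsqrt * Zsqrt * Zsqrtinv) = Zhsqrtinv * Zsqrt
        rw [mul_assoc, m3, mul_one]
      have e2 : Zhsqrtinv * (Zhsqrt ∘L Zhsqrt * Zsqrtinv) = Zhsqrt * Zsqrtinv := by
        show Zhsqrtinv * (Zhsqrt * Zhsqrt * Zsqrtinv) = Zhsqrt * Zsqrtinv
        rw [← mul_assoc, ← mul_assoc, m2, one_mul]
      rw [e1, e2]
    exact this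
  set M : H →L[ℝ] H := D - ContinuousLinearMap.adjoint C with hMdef
  rw [hM]
  -- M† M = (CCtinv - 1) + (A - 1)
  have hMt : ContinuousLinearMap.adjoint M = ContinuousLinearMap.adjoint D - C := by
    rw [hMdef, map_sub, ContinuousLinearMap.adjoint_adjoint]
  have key : ContinuousLinearMap.adjoint M ∘L M = (CCtinv - 1) + (A - 1) := by
    show ContinuousLinearMap.adjoint M * M = (CCtinv - 1) + (A - 1)
    rw [hMt, hMdef, sub_mul, mul_sub, mul_sub, hQ, hAmul, hDtCt, hCD]
    abel
  have hnorm : ‖M‖ * ‖M‖ = ‖ContinuousLinearMap.adjoint M ∘L M‖ :=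
    (ContinuousLinearMap.norm_adjoint_comp_self M).symm
  calc ‖M‖ ^ 2 = ‖ContinuousLinearMap.adjoint M ∘L M‖ := by rw [sq, hnorm]
    _ = ‖(CCtinv - 1) + (A - 1)‖ := by rw [key]
    _ ≤ ‖CCtinv - 1‖ + ‖A - 1‖ := norm_add_le _ _
end

section
/- Combining the previous two facts: if Ẑ, Z are bounded positive self-adjoint invertible operators on a Hilbert space with ‖Z^{-1/2} Ẑ Z^{-1/2} - Id‖ ≤ b for some b ∈ (0, 1/3), then for every ψ in the Hilbert space, ⟨ψ, Ẑ^{-1}ψ⟩ ≤ (√(1-b) / (√(1-b) - √(2b))) · ⟨ψ, Z^{-1}ψ⟩. -/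
open scoped RealInnerProductSpace

/-- If `‖Z^{-1/2} Ẑ Z^{-1/2} - Id‖ ≤ b` with `b ∈ (0, 1/3)`, then for all `ψ`,
`⟨ψ, Ẑ⁻¹ ψ⟩ ≤ (√(1-b) / (√(1-b) - √(2b))) ⟨ψ, Z⁻¹ ψ⟩`. -/
theorem stmt_3 {H : Type*} [NormedAddCommGroup H] [InnerProductSpace ℝ H] [CompleteSpace H]
    (Zh Z Zhinv Zinv Zsqrtinv : H →L[ℝ] H)
    (hZh_sa : IsSelfAdjoint Zh) (hZ_sa : IsSelfAdjoint Z)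
    (hZh_pos : ∀ ψ : H, ψ ≠ 0 → 0 < ⟪ψ, Zh ψ⟫)
    (hZ_pos : ∀ ψ : H, ψ ≠ 0 → 0 < ⟪ψ, Z ψ⟫)
    (hZhinv₁ : Zh ∘L Zhinv = 1) (hZhinv₂ : Zhinv ∘L Zh = 1)
    (hZinv₁ : Z ∘L Zinv = 1) (hZinv₂ : Zinv ∘L Z = 1)
    -- `Zsqrtinv` is the (self-adjoint, positive) inverse square root of `Z`
    (hZs_sa : IsSelfAdjoint Zsqrtinv)
    (hZs_pos : ∀ ψ : H, ψ ≠ 0 → 0 < ⟪ψ, Zsqrtinv ψ⟫)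
    (hZs : Zsqrtinv ∘L Zsqrtinv = Zinv)
    (b : ℝ) (hb : b ∈ Set.Ioo (0 : ℝ) (1 / 3))
    (hbnd : ‖Zsqrtinv ∘L Zh ∘L Zsqrtinv - 1‖ ≤ b) :
    ∀ ψ : H, ⟪ψ, Zhinv ψ⟫ ≤
      (Real.sqrt (1 - b) / (Real.sqrt (1 - b) - Real.sqrt (2 * b))) * ⟪ψ, Zinv ψ⟫ := by
  obtain ⟨hb0, hb3⟩ := hb
  have hb1 : (0:ℝ) < 1 - b := by linarith
  -- square root of Z
  set S := Zsqrtinv with hSdef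
  set R := Z ∘L Zsqrtinv with hRdef
  have hRS : R ∘L S = 1 := by
    rw [hRdef, ContinuousLinearMap.comp_assoc, hZs, hZinv₁]
  have hSR : S ∘L R = 1 := by
    have hSR' : S ∘L (Zsqrtinv ∘L Z) = 1 := by
      rw [← ContinuousLinearMap.comp_assoc, hZs, hZinv₂]
    have : R = Zsqrtinv ∘L Z := by
      calc R = R ∘L (S ∘L (Zsqrtinv ∘L Z)) := by
            rw [hSR', ContinuousLinearMap.one_def, ContinuousLinearMap.comp_id]
        _ = (R ∘L S) ∘L (Zsqrtinv ∘L Z) := by rw [← ContinuousLinearMap.comp_assoc]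
        _ = Zsqrtinv ∘L Z := by
            rw [hRS, ContinuousLinearMap.one_def, ContinuousLinearMap.id_comp]
    rw [this, hSR']
  have hRSx : ∀ x : H, R (S x) = x := fun x =>
    congrArg (fun f : H →L[ℝ] H => f x) hRS
  have hSRx : ∀ x : H, S (R x) = x := fun x =>
    congrArg (fun f : H →L[ℝ] H => f x) hSR
  have hZhx : ∀ x : H, Zh (Zhinv x) = x := fun x =>
    congrArg (fun f : H →L[ℝ] H => f x) hZhinv₁
  set A := Zsqrtinv ∘L Zh ∘L Zsqrtinv with hAdef
  set B := R ∘L Zhinv ∘L R with hBdef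
  have hABx : ∀ x : H, A (B x) = x := by
    intro x
    simp only [hAdef, hBdef, ContinuousLinearMap.comp_apply]
    rw [hSRx, hZhx, hSRx]
  have hkey : B = 1 + (1 - A) ∘L B := by
    ext x
    have := hABx x
    simp only [ContinuousLinearMap.add_apply, ContinuousLinearMap.comp_apply,
      ContinuousLinearMap.sub_apply, ContinuousLinearMap.one_apply, this]
    abel
  have hnB : ‖B‖ ≤ 1 / (1 - b) := by
    have h1 : ‖(1 : H →L[ℝ] H)‖ ≤ 1 := ContinuousLinearMap.norm_id_le
    have h2 : ‖(1 : H →L[ℝ] H) - A‖ ≤ b := by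
      rw [norm_sub_rev]; exact hbnd
    have h3 : ‖B‖ ≤ 1 + b * ‖B‖ := by
      calc ‖B‖ = ‖1 + (1 - A) ∘L B‖ := by rw [← hkey]
        _ ≤ ‖(1 : H →L[ℝ] H)‖ + ‖(1 - A) ∘L B‖ := norm_add_le _ _
        _ ≤ 1 + ‖(1 : H →L[ℝ] H) - A‖ * ‖B‖ := by
            gcongr
            exact ContinuousLinearMap.opNorm_comp_le _ _
        _ ≤ 1 + b * ‖B‖ := by
            gcongr
      -- done
    rw [le_div_iff₀ hb1]
    nlinarith [norm_nonneg B]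
  intro ψ
  set φ := S ψ with hφ
  -- rewrite the inner products
  have hSsym : ∀ x y : H, ⟪x, S y⟫ = ⟪S x, y⟫ := by
    intro x y
    have := hZs_sa
    rw [IsSelfAdjoint] at this
    calc ⟪x, S y⟫ = ⟪(ContinuousLinearMap.adjoint S) x, y⟫ := by
          rw [ContinuousLinearMap.adjoint_inner_left]
      _ = ⟪S x, y⟫ := by rw [← ContinuousLinearMap.star_eq_adjoint, this]
  have hinv : Zhinv ψ = S (B φ) := by
    simp only [hBdef, ContinuousLinearMap.comp_apply, hφ]
    rw [hRSx, hSRx]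
  have hL : ⟪ψ, Zhinv ψ⟫ = ⟪φ, B φ⟫ := by rw [hinv, hSsym]
  have hRR : ⟪ψ, Zinv ψ⟫ = ‖φ‖ ^ 2 := by
    have : Zinv ψ = S φ := by
      rw [hφ, ← ContinuousLinearMap.comp_apply, hZs]
    rw [this, hSsym, ← hφ, real_inner_self_eq_norm_sq]
  -- main estimate
  have hCS : ⟪φ, B φ⟫ ≤ (1 / (1 - b)) * ‖φ‖ ^ 2 := by
    calc ⟪φ, B φ⟫ ≤ ‖φ‖ * ‖B φ‖ := real_inner_le_norm _ _
      _ ≤ ‖φ‖ * (‖B‖ * ‖φ‖) := by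
          gcongr
          exact B.le_opNorm φ
      _ ≤ ‖φ‖ * ((1 / (1 - b)) * ‖φ‖) := by gcongr
      _ = (1 / (1 - b)) * ‖φ‖ ^ 2 := by ring
  -- constant comparison
  have hconst : 1 / (1 - b) ≤
      Real.sqrt (1 - b) / (Real.sqrt (1 - b) - Real.sqrt (2 * b)) := by
    set s1 := Real.sqrt (1 - b) with hs1
    set s2 := Real.sqrt (2 * b) with hs2
    have hs1sq : s1 ^ 2 = 1 - b := Real.sq_sqrt (le_of_lt hb1)
    have hs2sq : s2 ^ 2 = 2 * b := Real.sq_sqrt (by linarith)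
    have hs1pos : 0 < s1 := Real.sqrt_pos.mpr hb1
    have hs2pos : 0 < s2 := Real.sqrt_pos.mpr (by linarith)
    have hlt : s2 < s1 := by
      rw [hs1, hs2]
      exact Real.sqrt_lt_sqrt (by linarith) (by linarith)
    have hd : 0 < s1 - s2 := by linarith
    rw [div_le_div_iff₀ hb1 hd]
    -- need: 1 * (s1 - s2) ≤ s1 * (1 - b), i.e. b * s1 ≤ s2
    have hbs : b * s1 ≤ s2 := by
      nlinarith [sq_nonneg (b * s1 - s2), sq_nonneg (b * s1 + s2)]
    nlinarith [hs1sq]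
  rw [hL, hRR]
  calc ⟪φ, B φ⟫ ≤ (1 / (1 - b)) * ‖φ‖ ^ 2 := hCS
    _ ≤ (Real.sqrt (1 - b) / (Real.sqrt (1 - b) - Real.sqrt (2 * b))) * ‖φ‖ ^ 2 :=
        mul_le_mul_of_nonneg_right hconst (sq_nonneg _)
end

section
/- Let A and B be n×n real symmetric positive semidefinite matrices with all eigenvalues of B lying in the interval [1,2], and τ > 0. Then log det(I + τ^{-1} B^{-1/2} A B^{-1/2}) ≥ log det(I + (2τ)^{-1} A). -/
set_option maxHeartbeats 1000000

open Matrix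
open scoped MatrixOrder

private lemma psd_smul {n : ℕ} {c : ℝ} (hc : 0 ≤ c) {P : Matrix (Fin n) (Fin n) ℝ}
    (hP : P.PosSemidef) : (c • P).PosSemidef := by
  constructor
  · show (c • P)ᴴ = c • P
    rw [Matrix.conjTranspose_smul, hP.1.eq, star_trivial]
  · intro x
    exact (hP.smul hc).2 x

private lemma one_le_det_one_add {n : ℕ} {P : Matrix (Fin n) (Fin n) ℝ}
    (hP : P.PosSemidef) : 1 ≤ (1 + P).det := by
  have hH := hP.isHermitian
  set U : Matrix (Fin n) (Fin n) ℝ := (hH.eigenvectorUnitary : Matrix (Fin n) (Fin n) ℝ) with hU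
  have hUU : U * star U = 1 := (Matrix.mem_unitaryGroup_iff).mp hH.eigenvectorUnitary.2
  set D : Matrix (Fin n) (Fin n) ℝ := diagonal (RCLike.ofReal ∘ hH.eigenvalues) with hD
  have hspec : P = U * D * star U := hH.spectral_theorem
  have h1 : (1 : Matrix (Fin n) (Fin n) ℝ) + P = U * (1 + D) * star U := by
    rw [Matrix.mul_add, Matrix.add_mul, Matrix.mul_one, hUU, hspec]
  rw [h1, Matrix.det_mul, Matrix.det_mul]
  have hdet1 : U.det * (star U).det = 1 := by
    rw [← Matrix.det_mul, hUU, Matrix.det_one]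
  have hre : U.det * (1 + D).det * (star U).det = (1 + D).det * (U.det * (star U).det) := by ring
  rw [hre, hdet1, mul_one, hD]
  have h2 : (1 : Matrix (Fin n) (Fin n) ℝ) + diagonal (RCLike.ofReal ∘ hH.eigenvalues)
      = diagonal (fun i => 1 + hH.eigenvalues i) := by
    rw [← Matrix.diagonal_one, Matrix.diagonal_add]
    congr 1
  rw [h2, Matrix.det_diagonal]
  calc (1:ℝ) = ∏ _i : Fin n, (1:ℝ) := (Finset.prod_const_one).symm
    _ ≤ ∏ i, (1 + hH.eigenvalues i) :=
        Finset.prod_le_prod (fun i _ => zero_le_one)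
          (fun i _ => by linarith [hP.eigenvalues_nonneg i])

private lemma det_mono {n : ℕ} {M P : Matrix (Fin n) (Fin n) ℝ}
    (hM : M.PosDef) (hP : P.PosSemidef) : M.det ≤ (M + P).det := by
  set Ms := CFC.sqrt M with hMs
  have hMspsd : Ms.PosSemidef := (CFC.sqrt_nonneg M).posSemidef
  have hMssq : Ms * Ms = M := CFC.sqrt_mul_sqrt_self M hM.posSemidef.nonneg
  have hMsdet : IsUnit Ms.det := by
    have h := hM.det_pos
    rw [← hMssq, Matrix.det_mul] at h
    have hne : Ms.det ≠ 0 := fun h0 => by rw [h0, mul_zero] at h; exact lt_irrefl 0 h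
    exact hne.isUnit
  have hMinv : M⁻¹ = Ms⁻¹ * Ms⁻¹ := by rw [← hMssq, Matrix.mul_inv_rev]
  have hMunit : IsUnit M.det := (ne_of_gt hM.det_pos).isUnit
  have key : M + P = M * (1 + M⁻¹ * P) := by
    rw [Matrix.mul_add, Matrix.mul_one, ← Matrix.mul_assoc,
      Matrix.mul_nonsing_inv M hMunit, Matrix.one_mul]
  rw [key, Matrix.det_mul]
  have h2 : (1 + M⁻¹ * P).det = (1 + Ms⁻¹ * (P * Ms⁻¹)).det := by
    rw [hMinv, Matrix.mul_assoc, Matrix.det_one_add_mul_comm, Matrix.mul_assoc]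
  have hconj : (Ms⁻¹ * (P * Ms⁻¹)).PosSemidef := by
    have h := hP.conjTranspose_mul_mul_same Ms⁻¹
    rw [hMspsd.isHermitian.inv.eq, Matrix.mul_assoc] at h
    exact h
  have h3 := one_le_det_one_add hconj
  rw [h2]
  nlinarith [hM.det_pos]

/-- If `A`, `B` are PSD with the eigenvalues of `B` in `[1,2]`
(i.e. `I ⪯ B ⪯ 2I`), `Bs = B^{1/2}`, and `τ > 0`, then
`log det(I + τ⁻¹ B^{-1/2} A B^{-1/2}) ≥ log det(I + (2τ)⁻¹ A)`. -/
theorem stmt_9 {n : ℕ} (A B Bs : Matrix (Fin n) (Fin n) ℝ) (τ : ℝ) (hτ : 0 < τ)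
    (hA : A.PosSemidef)
    (hB_lower : (B - 1).PosSemidef)
    (hB_upper : ((2 : ℝ) • (1 : Matrix (Fin n) (Fin n) ℝ) - B).PosSemidef)
    (hBs : Bs.PosSemidef) (hBs_sq : Bs * Bs = B) :
    Real.log (1 + (2 * τ)⁻¹ • A).det ≤
      Real.log (1 + τ⁻¹ • (Bs⁻¹ * A * Bs⁻¹)).det := by
  classical
  have hBpd : B.PosDef := by
    have h := Matrix.PosDef.posSemidef_add hB_lower (Matrix.PosDef.one (n := Fin n) (R := ℝ))
    rwa [sub_add_cancel] at h
  have hBsdet : IsUnit Bs.det := by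
    have h := hBpd.det_pos
    rw [← hBs_sq, Matrix.det_mul] at h
    have hne : Bs.det ≠ 0 := fun h0 => by rw [h0, mul_zero] at h; exact lt_irrefl 0 h
    exact hne.isUnit
  have hBsinv_mul : Bs⁻¹ * Bs = 1 := Matrix.nonsing_inv_mul Bs hBsdet
  have hBs_mulinv : Bs * Bs⁻¹ = 1 := Matrix.mul_nonsing_inv Bs hBsdet
  have hBinv : B⁻¹ = Bs⁻¹ * Bs⁻¹ := by rw [← hBs_sq, Matrix.mul_inv_rev]
  have hBsiH : Bs⁻¹.IsHermitian := hBs.isHermitian.inv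
  set As := CFC.sqrt A with hAsdef
  have hAspsd : As.PosSemidef := (CFC.sqrt_nonneg A).posSemidef
  have hAs_sq : As * As = A := CFC.sqrt_mul_sqrt_self A hA.nonneg
  -- conjugation identity : Bs⁻¹ * B * Bs⁻¹ = 1
  have hconjB : Bs⁻¹ * B * Bs⁻¹ = 1 := by
    rw [show Bs⁻¹ * B * Bs⁻¹ = Bs⁻¹ * (B * Bs⁻¹) from Matrix.mul_assoc _ _ _, ← hBs_sq,
      Matrix.mul_assoc Bs Bs Bs⁻¹, hBs_mulinv, Matrix.mul_one, hBsinv_mul]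
  -- middle term PSD : 2•B⁻¹ - 1 ⪰ 0
  have hmid : ((2 : ℝ) • B⁻¹ - 1).PosSemidef := by
    have h := hB_upper.conjTranspose_mul_mul_same Bs⁻¹
    rw [hBsiH.eq] at h
    have heq : Bs⁻¹ * ((2 : ℝ) • (1 : Matrix (Fin n) (Fin n) ℝ) - B) * Bs⁻¹
        = (2 : ℝ) • B⁻¹ - 1 := by
      rw [Matrix.mul_sub, Matrix.sub_mul, hconjB, mul_smul_comm, smul_mul_assoc,
        Matrix.mul_one, hBinv]
    rwa [heq] at h
  set D := As * ((2 * τ)⁻¹ • ((2 : ℝ) • B⁻¹ - 1)) * As with hDdef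
  have hDpsd : D.PosSemidef := by
    have h := (psd_smul (c := (2 * τ)⁻¹) (by positivity) hmid).conjTranspose_mul_mul_same As
    rwa [hAspsd.isHermitian.eq] at h
  have inner : As * ((2 : ℝ) • B⁻¹ - 1) * As = (2 : ℝ) • (As * B⁻¹ * As) - A := by
    rw [Matrix.mul_sub, Matrix.mul_one, Matrix.sub_mul, hAs_sq, mul_smul_comm, smul_mul_assoc]
  have hDalg : D = τ⁻¹ • (As * B⁻¹ * As) - (2 * τ)⁻¹ • A := by
    rw [hDdef, mul_smul_comm, smul_mul_assoc, inner, smul_sub, smul_smul,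
      show (2 * τ)⁻¹ * 2 = τ⁻¹ by field_simp]
  set M := (1 : Matrix (Fin n) (Fin n) ℝ) + (2 * τ)⁻¹ • A with hMdef
  set N := (1 : Matrix (Fin n) (Fin n) ℝ) + τ⁻¹ • (As * B⁻¹ * As) with hNdef
  have hMN : N = M + D := by
    rw [hMdef, hNdef, hDalg]; abel
  have hMpd : M.PosDef :=
    (Matrix.PosDef.one (n := Fin n) (R := ℝ)).add_posSemidef
      (psd_smul (c := (2 * τ)⁻¹) (by positivity) hA)
  have hRHS : (1 + τ⁻¹ • (Bs⁻¹ * A * Bs⁻¹)).det = N.det := by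
    have h1 : (1 : Matrix (Fin n) (Fin n) ℝ) + τ⁻¹ • (Bs⁻¹ * A * Bs⁻¹)
        = 1 + (τ⁻¹ • (Bs⁻¹ * As)) * (As * Bs⁻¹) := by
      rw [smul_mul_assoc]
      congr 2
      rw [← hAs_sq]
      simp [Matrix.mul_assoc]
    rw [h1, Matrix.det_one_add_mul_comm, hNdef]
    congr 2
    rw [mul_smul_comm, hBinv]
    congr 1
    simp [Matrix.mul_assoc]
  rw [hRHS]
  have hdetle : M.det ≤ N.det := by
    rw [hMN]; exact det_mono hMpd hDpsd
  exact Real.log_le_log hMpd.det_pos hdetle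
end
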